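/- Let φ : U → V be a linear map between finite-dimensional real vector spaces and let D_U ⊆ U × U* be a linear Dirac structure on U. Then the forward image F_φ(D_U) = {(φ(u), β) | u ∈ U, β ∈ V*, (u, β ∘ φ) ∈ D_U} is a linear Dirac structure on V. -/

import Mathlib

/-- The canonical symmetric pairing `⟪(u₁,α₁),(u₂,α₂)⟫ = α₁(u₂) + α₂(u₁)`
on `U ⊕ U*`, as a bilinear form. -/
noncomputable def diracPairing (U : Type*) [AddCommGroup U] [Module ℝ U] :
    LinearMap.BilinForm ℝ (U × Module.Dual ℝ U) :=
  LinearMap.mk₂ ℝ (fun x y => x.2 y.1 + y.2 x.1)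
    (by intro m₁ m₂ n; simp; ring)
    (by intro c m n; simp; ring)
    (by intro m n₁ n₂; simp; ring)
    (by intro c m n; simp; ring)

/-- The orthogonal complement of a subspace `D ⊆ U ⊕ U*` with respect to the
canonical pairing. -/
noncomputable def diracOrthogonal (U : Type*) [AddCommGroup U] [Module ℝ U]
    (D : Submodule ℝ (U × Module.Dual ℝ U)) : Submodule ℝ (U × Module.Dual ℝ U) :=
  LinearMap.BilinForm.orthogonal (diracPairing U) D

/-- The forward image `F_φ(D_U) = {(φ(u), β) | u ∈ U, β ∈ V*, (u, β ∘ φ) ∈ D_U}`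
of a subspace `D_U ⊆ U ⊕ U*` under a linear map `φ : U → V`. -/
noncomputable def forwardImage {U V : Type*} [AddCommGroup U] [Module ℝ U]
    [AddCommGroup V] [Module ℝ V] (φ : U →ₗ[ℝ] V)
    (D : Submodule ℝ (U × Module.Dual ℝ U)) : Submodule ℝ (V × Module.Dual ℝ V) where
  carrier := {p | ∃ u : U, p.1 = φ u ∧ (u, p.2.comp φ) ∈ D}
  add_mem' := by
    rintro ⟨v₁, β₁⟩ ⟨v₂, β₂⟩ ⟨u₁, h₁, hD₁⟩ ⟨u₂, h₂, hD₂⟩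
    refine ⟨u₁ + u₂, by simp at h₁ h₂; simp [h₁, h₂], ?_⟩
    simpa [LinearMap.add_comp] using D.add_mem hD₁ hD₂
  zero_mem' := ⟨0, by simp, by simp; exact D.zero_mem⟩
  smul_mem' := by
    rintro c ⟨v, β⟩ ⟨u, h, hD⟩
    refine ⟨c • u, by simp at h; simp [h], ?_⟩
    simpa [LinearMap.smul_comp] using D.smul_mem c hD


private lemma factor_through_aux {M N : Type*} [AddCommGroup M] [Module ℝ M]
    [AddCommGroup N] [Module ℝ N]
    (g : M →ₗ[ℝ] N) (f : M →ₗ[ℝ] ℝ) (hker : LinearMap.ker g ≤ LinearMap.ker f) :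
    ∃ L : N →ₗ[ℝ] ℝ, ∀ m, L (g m) = f m := by
  obtain ⟨L, hL⟩ := (((LinearMap.ker g).liftQ f hker).comp
    g.quotKerEquivRange.symm.toLinearMap).exists_extend
  refine ⟨L, fun d => ?_⟩
  have h1 : g.quotKerEquivRange (Submodule.Quotient.mk d)
      = ⟨g d, LinearMap.mem_range_self g d⟩ := Subtype.ext (g.quotKerEquivRange_apply_mk d)
  have h2 : g.quotKerEquivRange.symm ⟨g d, LinearMap.mem_range_self g d⟩
      = Submodule.Quotient.mk d := by
    rw [← h1, LinearEquiv.symm_apply_apply]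
  calc L (g d) = (L.comp (LinearMap.range g).subtype) ⟨g d, LinearMap.mem_range_self g d⟩ :=
        rfl
    _ = ((LinearMap.ker g).liftQ f hker)
          (g.quotKerEquivRange.symm ⟨g d, LinearMap.mem_range_self g d⟩) := by rw [hL]; rfl
    _ = ((LinearMap.ker g).liftQ f hker) (Submodule.Quotient.mk d) := by rw [h2]
    _ = f d := Submodule.liftQ_apply _ f d

/-- The forward image of a linear Dirac structure under a linear map
between finite-dimensional real vector spaces is a linear Dirac structure. -/
theorem forward_of_dirac_is_dirac
    {U V : Type*} [AddCommGroup U] [Module ℝ U] [FiniteDimensional ℝ U]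
    [AddCommGroup V] [Module ℝ V] [FiniteDimensional ℝ V]
    (φ : U →ₗ[ℝ] V) (DU : Submodule ℝ (U × Module.Dual ℝ U))
    (hDU : DU = diracOrthogonal U DU) :
    forwardImage φ DU = diracOrthogonal V (forwardImage φ DU) := by
  classical
  -- isotropy of DU
  have key : ∀ x y : U × Module.Dual ℝ U, x ∈ DU → y ∈ DU → x.2 y.1 + y.2 x.1 = 0 := by
    intro x y hx hy
    have hy' : y ∈ diracOrthogonal U DU := hDU ▸ hy
    simpa [diracPairing] using hy' x hx
  apply le_antisymm
  · -- F ⊆ F^⊥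
    rintro ⟨v₂, β₂⟩ ⟨u₂, h2, hd2⟩
    rintro ⟨v₁, β₁⟩ ⟨u₁, h1, hd1⟩
    have := key _ _ hd1 hd2
    simp only at h1 h2
    simp only [diracPairing, LinearMap.BilinForm.IsOrtho, LinearMap.mk₂_apply, h1, h2]
    simpa using this
  · -- F^⊥ ⊆ F
    rintro ⟨v, β⟩ hvβ
    set α : Module.Dual ℝ U := β.comp φ with hα
    have horth : ∀ (u' : U) (γ : Module.Dual ℝ V), (u', γ.comp φ) ∈ DU →
        γ v + β (φ u') = 0 := by
      intro u' γ h
      have hmem : ((φ u', γ) : V × Module.Dual ℝ V) ∈ forwardImage φ DU := ⟨u', rfl, h⟩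
      simpa [diracPairing, LinearMap.BilinForm.IsOrtho] using hvβ _ hmem
    -- the functional data
    obtain ⟨g, hgval⟩ : ∃ g : DU →ₗ[ℝ] Module.Dual ℝ U, ∀ d : DU, g d = d.1.2 :=
      ⟨(LinearMap.snd ℝ U (Module.Dual ℝ U)).comp DU.subtype, fun d => rfl⟩
    obtain ⟨f, hfval⟩ : ∃ f : DU →ₗ[ℝ] ℝ, ∀ d : DU, f d = -(α d.1.1) :=
      ⟨-(α.comp ((LinearMap.fst ℝ U (Module.Dual ℝ U)).comp DU.subtype)), fun d => rfl⟩
    have hker : LinearMap.ker g ≤ LinearMap.ker f := by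
      rintro ⟨⟨u', α'⟩, hd⟩ h
      have h0 : α' = 0 := by
        have := LinearMap.mem_ker.mp h
        rwa [hgval] at this
      have hd' : (u', (0 : Module.Dual ℝ V).comp φ) ∈ DU := by
        simpa [LinearMap.zero_comp, ← h0] using hd
      have := horth u' 0 hd'
      simp only [LinearMap.zero_apply, zero_add] at this
      simp only [LinearMap.mem_ker, hfval, hα, LinearMap.comp_apply, this, neg_zero]
    -- factor f through g and extend to a functional on the dual
    obtain ⟨L, hLg⟩ := factor_through_aux (M := DU) (N := Module.Dual ℝ U) g f hker
    set u₁ : U := (Module.evalEquiv ℝ U).symm L with hu₁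
    have hu₁app : ∀ α' : Module.Dual ℝ U, α' u₁ = L α' := fun α' =>
      Module.apply_evalEquiv_symm_apply ℝ U α' L
    have hP : ∀ x : U × Module.Dual ℝ U, x ∈ DU → x.2 u₁ = -(α x.1) := by
      intro x hx
      have := hLg ⟨x, hx⟩
      rw [hgval, hfval] at this
      rw [hu₁app, this]
    -- the annihilator argument
    set S : Submodule ℝ (Module.Dual ℝ U) :=
      DU.map (LinearMap.snd ℝ U (Module.Dual ℝ U)) with hS
    set W : Submodule ℝ V := S.dualCoannihilator.map φ with hWdef
    have hW : v - φ u₁ ∈ W := by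
      rw [← Subspace.dualAnnihilator_dualCoannihilator_eq (W := W),
        Submodule.mem_dualCoannihilator]
      intro γ hγ
      -- γ ∘ φ ∈ S
      have hcomp : γ.comp φ ∈ S := by
        have hmem : φ.dualMap γ ∈ S.dualCoannihilator.dualAnnihilator := by
          rw [Submodule.mem_dualAnnihilator]
          intro x hx
          exact (Submodule.mem_dualAnnihilator γ).mp hγ (φ x) ⟨x, hx, rfl⟩
        rwa [Subspace.dualCoannihilator_dualAnnihilator_eq] at hmem
      obtain ⟨⟨u', α'⟩, hd, hα'⟩ := hcomp
      simp only [LinearMap.snd_apply] at hα'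
      have h1 : γ v + β (φ u') = 0 := horth u' γ (by rw [← hα']; exact hd)
      have h2 : α' u₁ = -(α u') := hP (u', α') hd
      have h3 : γ (φ u₁) = α' u₁ := by rw [hα']; rfl
      have h4 : β (φ u') = α u' := rfl
      rw [h4] at h1
      rw [map_sub, h3, h2]
      linarith
    obtain ⟨w, hw, hφw⟩ := hW
    refine ⟨u₁ + w, ?_, ?_⟩
    · simp only [map_add, hφw]
      abel
    · rw [hDU]
      intro x hx
      have hx2S : x.2 ∈ S := ⟨x, hx, rfl⟩
      have hw0 : x.2 w = 0 := (Submodule.mem_dualCoannihilator w).mp hw x.2 hx2S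
      have h2 : x.2 u₁ = -(α x.1) := hP x hx
      simp only [diracPairing, LinearMap.BilinForm.IsOrtho, LinearMap.mk₂_apply,
        map_add, h2, hw0]
      have : (β.comp φ) x.1 = α x.1 := rfl
      rw [this]
      ring
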